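/- arXiv:2504.06466 — 2 statements merged into one kernel-verified Lean document; each statement's English description precedes it below -/
import Mathlib

section
/- For every composition a = (a_1,...,a_k) of n with all parts positive, there exists a weakly flattened Fubini ranking of length n with runs of weak ascents whose reduced content is a; in fact any weakly increasing Fubini ranking has a single run of weak ascents and is weakly flattened. -/
/-- A Fubini ranking of length `n`: entries in `{1,...,n}` and every value `v`
appearing satisfies `v = 1 + #{j : r_j < v}`. -/
def IsFubini (n : ℕ) (l : List ℕ) : Prop :=
  l.length = n ∧ (∀ x ∈ l, 1 ≤ x ∧ x ≤ n) ∧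
    ∀ v ∈ l, v = 1 + l.countP (fun x => decide (x < v))

/-- Split a list (with given head) into maximal runs w.r.t. relation `R`. -/
def runsAux (R : ℕ → ℕ → Bool) : ℕ → List ℕ → List (List ℕ)
  | a, [] => [[a]]
  | a, b :: l =>
    match runsAux R b l with
    | (c :: r) :: rest =>
        if R a b then (a :: c :: r) :: rest else [a] :: (c :: r) :: rest
    | rs => [a] :: rs

/-- The maximal runs of a list with respect to the relation `R`. -/
def runs (R : ℕ → ℕ → Bool) : List ℕ → List (List ℕ)
  | [] => []
  | a :: l => runsAux R a l

/-- Maximal runs of weak ascents. -/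
def weakRuns (l : List ℕ) : List (List ℕ) := runs (fun a b => decide (a ≤ b)) l

/-- Maximal runs of strict ascents. -/
def strictRuns (l : List ℕ) : List (List ℕ) := runs (fun a b => decide (a < b)) l

/-- Leading terms of a list of runs. -/
def leadingTerms (rs : List (List ℕ)) : List ℕ := rs.map List.headI

/-- Weakly flattened w.r.t. runs of weak ascents. -/
def WeaklyFlattenedWeak (l : List ℕ) : Prop :=
  (leadingTerms (weakRuns l)).Chain' (· ≤ ·)

/-- Flattened w.r.t. runs of weak ascents. -/
def FlattenedWeak (l : List ℕ) : Prop :=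
  (leadingTerms (weakRuns l)).Chain' (· < ·)

/-- Weakly flattened w.r.t. runs of strict ascents. -/
def WeaklyFlattenedStrict (l : List ℕ) : Prop :=
  (leadingTerms (strictRuns l)).Chain' (· ≤ ·)

/-- Flattened w.r.t. runs of strict ascents. -/
def FlattenedStrict (l : List ℕ) : Prop :=
  (leadingTerms (strictRuns l)).Chain' (· < ·)

/-- The content `(c_1, ..., c_n)` of a tuple of length `n`: `c_i` is the number
of entries equal to `i`. -/
def content (l : List ℕ) : List ℕ :=
  (List.range l.length).map (fun i => l.count (i + 1))

/-- The reduced content: multiplicities of the distinct values, in increasing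
order of the values. -/
def reducedContent (l : List ℕ) : List ℕ :=
  (l.toFinset.sort (· ≤ ·)).map (fun v => l.count v)

/-- `a_1` copies of `1`, then `a_2` copies of `1 + a_1`, etc. (auxiliary). -/
def stairsAux : ℕ → List ℕ → List ℕ
  | _, [] => []
  | s, c :: rest => List.replicate c (s + 1) ++ stairsAux (s + c) rest

/-- The weakly increasing tuple with reduced content `a`. -/
def stairs (a : List ℕ) : List ℕ := stairsAux 0 a


lemma stairsAux_length (a : List ℕ) : ∀ s, (stairsAux s a).length = a.sum := by
  induction a with
  | nil => intro s; rfl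
  | cons c rest ih => intro s; simp [stairsAux, ih]

lemma stairsAux_lb (a : List ℕ) : ∀ s, ∀ x ∈ stairsAux s a, s < x := by
  induction a with
  | nil => intro s x hx; simp [stairsAux] at hx
  | cons c rest ih =>
    intro s x hx
    simp only [stairsAux, List.mem_append, List.mem_replicate] at hx
    rcases hx with h | h
    · omega
    · have := ih (s + c) x h; omega

lemma stairsAux_ub (a : List ℕ) (ha : ∀ x ∈ a, 0 < x) :
    ∀ s, ∀ x ∈ stairsAux s a, x ≤ s + a.sum := by
  induction a with
  | nil => intro s x hx; simp [stairsAux] at hx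
  | cons c rest ih =>
    intro s x hx
    simp only [stairsAux, List.mem_append, List.mem_replicate] at hx
    have hc : 0 < c := ha c (by simp)
    rcases hx with h | h
    · simp; omega
    · have := ih (fun y hy => ha y (by simp [hy])) (s + c) x h
      simp; omega

lemma stairsAux_count (a : List ℕ) :
    ∀ s, ∀ v ∈ stairsAux s a,
      v = s + 1 + (stairsAux s a).countP (fun x => decide (x < v)) := by
  induction a with
  | nil => intro s v hv; simp [stairsAux] at hv
  | cons c rest ih =>
    intro s v hv
    simp only [stairsAux, List.mem_append, List.mem_replicate] at hv
    rw [stairsAux, List.countP_append]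
    rcases hv with ⟨hc, rfl⟩ | h
    · have h1 : (List.replicate c (s + 1)).countP (fun x => decide (x < s + 1)) = 0 := by
        rw [List.countP_eq_zero]; intro x hx
        simp only [List.mem_replicate] at hx; simp [hx.2]
      have h2 : (stairsAux (s + c) rest).countP (fun x => decide (x < s + 1)) = 0 := by
        rw [List.countP_eq_zero]; intro x hx
        have := stairsAux_lb rest (s + c) x hx
        simp; omega
      omega
    · have hvlb := stairsAux_lb rest (s + c) v h
      have h1 : (List.replicate c (s + 1)).countP (fun x => decide (x < v)) = c := by
        have hall : ∀ x ∈ List.replicate c (s + 1), (fun x => decide (x < v)) x = true := by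
          intro x hx; rw [List.mem_replicate] at hx; simp; omega
        rw [List.countP_eq_length.2 hall, List.length_replicate]
      have := ih (s + c) v h
      omega

lemma stairsAux_sorted (a : List ℕ) : ∀ s, (stairsAux s a).Pairwise (· ≤ ·) := by
  induction a with
  | nil => intro s; simp [stairsAux]
  | cons c rest ih =>
    intro s
    rw [stairsAux, List.pairwise_append]
    refine ⟨?_, ih (s + c), ?_⟩
    · exact List.pairwise_replicate.2 (Or.inr le_rfl)
    · intro x hx y hy
      simp only [List.mem_replicate] at hx
      have := stairsAux_lb rest (s + c) y hy
      omega

lemma dedup_replicate_append (v : ℕ) (t : List ℕ) (hv : v ∉ t) :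
    ∀ c, 0 < c → (List.replicate c v ++ t).dedup = v :: t.dedup := by
  intro c
  induction c with
  | zero => omega
  | succ c ih =>
    intro _
    rcases Nat.eq_zero_or_pos c with rfl | hc
    · simp [List.dedup_cons_of_notMem hv]
    · rw [List.replicate_succ, List.cons_append,
        List.dedup_cons_of_mem (by simp [List.mem_replicate]; omega), ih hc]

lemma sorted_toFinset_sort (l : List ℕ) (hl : l.Pairwise (· ≤ ·)) :
    l.toFinset.sort (· ≤ ·) = l.dedup := by
  apply List.Perm.eq_of_pairwise' (Finset.pairwise_sort _ _) (hl.sublist l.dedup_sublist) ?_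
  refine (List.perm_ext_iff_of_nodup (Finset.sort_nodup _ _) l.nodup_dedup).mpr ?_
  intro x
  simp [Finset.mem_sort, List.mem_dedup]

lemma reducedContent_stairsAux (a : List ℕ) (ha : ∀ x ∈ a, 0 < x) :
    ∀ s, (stairsAux s a).dedup.map (fun v => (stairsAux s a).count v) = a := by
  induction a with
  | nil => intro s; simp [stairsAux]
  | cons c rest ih =>
    intro s
    have hc : 0 < c := ha c (by simp)
    have hnm : s + 1 ∉ stairsAux (s + c) rest := by
      intro h
      have := stairsAux_lb rest (s + c) _ h
      omega
    rw [stairsAux, dedup_replicate_append _ _ hnm c hc]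
    rw [List.map_cons]
    congr 1
    · rw [List.count_append, List.count_replicate_self, List.count_eq_zero_of_not_mem hnm]
      omega
    · rw [List.map_congr_left (g := fun v => (stairsAux (s + c) rest).count v) ?_]
      · exact ih (fun y hy => ha y (by simp [hy])) (s + c)
      · intro v hv
        have hvmem : v ∈ stairsAux (s + c) rest := List.mem_dedup.1 hv
        have := stairsAux_lb rest (s + c) v hvmem
        have hz : List.count v (List.replicate c (s + 1)) = 0 := by
          rw [List.count_eq_zero]
          intro hm; rw [List.mem_replicate] at hm; omega
        rw [List.count_append, hz, Nat.zero_add]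

lemma runsAux_of_sorted (l : List ℕ) :
    ∀ a, (a :: l).Chain' (· ≤ ·) →
      runsAux (fun a b => decide (a ≤ b)) a l = [a :: l] := by
  induction l with
  | nil => intro a _; rfl
  | cons b l ih =>
    intro a h
    unfold List.Chain' at h; rw [List.isChain_cons_cons] at h
    rw [runsAux, ih b h.2]
    simp [h.1]

lemma weakRuns_of_sorted (l : List ℕ) (hne : l ≠ []) (hl : l.Chain' (· ≤ ·)) :
    weakRuns l = [l] := by
  cases l with
  | nil => exact absurd rfl hne
  | cons a l => exact runsAux_of_sorted l a hl

theorem exists_wflat_wruns_reducedContent (n : ℕ) (hn : 1 ≤ n) (a : List ℕ)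
    (ha : ∀ x ∈ a, 0 < x) (hsum : a.sum = n) :
    (∃ l : List ℕ, IsFubini n l ∧ reducedContent l = a ∧
      WeaklyFlattenedWeak l ∧ (weakRuns l).length = 1) ∧
    ∀ l : List ℕ, IsFubini n l → l.Chain' (· ≤ ·) →
      WeaklyFlattenedWeak l ∧ (weakRuns l).length = 1 := by
  have main : ∀ l : List ℕ, IsFubini n l → l.Chain' (· ≤ ·) →
      WeaklyFlattenedWeak l ∧ (weakRuns l).length = 1 := by
    intro l hf hc
    have hne : l ≠ [] := by
      intro h; rw [h] at hf; simp [IsFubini] at hf; omega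
    have hw := weakRuns_of_sorted l hne hc
    constructor
    · unfold WeaklyFlattenedWeak
      rw [hw]
      simp [leadingTerms, List.Chain']
    · rw [hw]; rfl
  refine ⟨⟨stairs a, ?_, ?_, ?_⟩, main⟩
  · refine ⟨by rw [stairs, stairsAux_length, hsum], ?_, ?_⟩
    · intro x hx
      have h1 := stairsAux_lb a 0 x hx
      have h2 := stairsAux_ub a ha 0 x hx
      omega
    · intro v hv
      have := stairsAux_count a 0 v hv
      rw [stairs]; omega
  · rw [reducedContent, stairs, sorted_toFinset_sort _ (stairsAux_sorted a 0)]
    exact reducedContent_stairsAux a ha 0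
  · have hF : IsFubini n (stairs a) := by
      refine ⟨by rw [stairs, stairsAux_length, hsum], ?_, ?_⟩
      · intro x hx
        have h1 := stairsAux_lb a 0 x hx
        have h2 := stairsAux_ub a ha 0 x hx
        omega
      · intro v hv
        have := stairsAux_count a 0 v hv
        rw [stairs]; omega
    exact main _ hF (List.isChain_iff_pairwise.2 (stairsAux_sorted a 0))
end

section
/- Suppose a flattened Fubini ranking with runs of weak ascents has reduced content with m parts (i.e., m distinct values appear) and has k runs of weak ascents. Then k < max(m, 2). -/
lemma runsAux_shape (R : ℕ → ℕ → Bool) (a : ℕ) (l : List ℕ) :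
    ∃ t rest, runsAux R a l = (a :: t) :: rest := by
  induction l generalizing a with
  | nil => exact ⟨[], [], rfl⟩
  | cons b l ih =>
    obtain ⟨t, rest, h⟩ := ih b
    simp only [runsAux, h]
    by_cases hR : R a b
    · exact ⟨b :: t, rest, by simp [hR]⟩
    · exact ⟨[], (b :: t) :: rest, by simp [hR]⟩

lemma mem_heads (R : ℕ → ℕ → Bool) (a : ℕ) (l : List ℕ) (x : ℕ)
    (hx : x ∈ (runsAux R a l).map List.headI) : x ∈ a :: l := by
  induction l generalizing a with
  | nil => simpa [runsAux] using hx
  | cons b l ih =>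
    obtain ⟨t, rest, h⟩ := runsAux_shape R b l
    simp only [runsAux, h] at hx
    by_cases hR : R a b <;> simp [hR] at hx
    · rcases hx with rfl | hx
      · simp
      · have := ih b (by rw [h]; simpa using Or.inr hx)
        simpa using Or.inr this
    · rcases hx with rfl | hx
      · simp
      · have := ih b (by rw [h]; simpa using hx)
        simpa using Or.inr this

lemma last_head_spec (R : ℕ → ℕ → Bool) (a : ℕ) (l : List ℕ)
    (hlen : 2 ≤ (runsAux R a l).length) :
    ∃ x ∈ a :: l, ∃ y, ((runsAux R a l).map List.headI).getLast? = some y ∧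
      R x y = false := by
  induction l generalizing a with
  | nil => simp [runsAux] at hlen
  | cons b l ih =>
    obtain ⟨t, rest, h⟩ := runsAux_shape R b l
    simp only [runsAux, h] at hlen ⊢
    by_cases hR : R a b <;> simp only [hR, if_true, if_false, Bool.false_eq_true] at hlen ⊢
    · -- result (a :: b :: t) :: rest, need rest ≠ []
      simp at hlen
      obtain ⟨r0, rs, rfl⟩ := List.exists_cons_of_ne_nil (List.ne_nil_of_length_pos (by omega) : rest ≠ [])
      obtain ⟨x, hx, y, hy, hxy⟩ := ih b (by rw [h]; simp)
      rw [h] at hy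
      refine ⟨x, by simpa using Or.inr hx, y, ?_, hxy⟩
      simpa using hy
    · cases rest with
      | nil =>
        refine ⟨a, by simp, b, by simp, by simpa using hR⟩
      | cons r0 rs =>
        obtain ⟨x, hx, y, hy, hxy⟩ := ih b (by rw [h]; simp)
        rw [h] at hy
        refine ⟨x, by simpa using Or.inr hx, y, ?_, hxy⟩
        simpa using hy

theorem flat_wruns_length_lt (n : ℕ) (l : List ℕ) (hf : IsFubini n l)
    (hfl : FlattenedWeak l) :
    (weakRuns l).length < max (reducedContent l).length 2 := by
  simp only [FlattenedWeak, leadingTerms, weakRuns] at hfl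
  simp only [weakRuns]
  cases l with
  | nil => simp [runs]
  | cons a l =>
    set R : ℕ → ℕ → Bool := fun a b => decide (a ≤ b) with hRdef
    have hruns : runs R (a :: l) = runsAux R a l := rfl
    rw [hruns] at hfl ⊢
    by_cases hk : 2 ≤ (runsAux R a l).length
    · obtain ⟨x, hx, y, hy, hxy⟩ := last_head_spec R a l hk
      have hyx : y < x := by
        simp [hRdef] at hxy; omega
      set H := (runsAux R a l).map List.headI with hH
      have hchain : (H ++ [x]).Chain' (· < ·) := by
        rw [show (H ++ [x]).Chain' (· < ·) ↔ _ from List.isChain_append]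
        refine ⟨hfl, List.isChain_singleton x, ?_⟩
        intro u hu v hv
        simp at hv
        rw [hy] at hu
        simp at hu
        omega
      have hnodup : (H ++ [x]).Nodup :=
        ((List.isChain_iff_pairwise).mp hchain).imp ne_of_lt
      have hsub : (H ++ [x]).toFinset ⊆ (a :: l).toFinset := by
        intro z hz
        simp only [List.mem_toFinset, List.mem_append] at hz
        rcases hz with hz | hz
        · exact List.mem_toFinset.mpr (mem_heads R a l z hz)
        · simp at hz; subst hz; exact List.mem_toFinset.mpr hx
      have hcard : (H ++ [x]).toFinset.card = H.length + 1 := by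
        rw [List.toFinset_card_of_nodup hnodup]; simp
      have hle : H.length + 1 ≤ (a :: l).toFinset.card := by
        rw [← hcard]; exact Finset.card_le_card hsub
      have hm : (reducedContent (a :: l)).length = (a :: l).toFinset.card := by
        simp [reducedContent]
      have hHlen : H.length = (runsAux R a l).length := by simp [hH]
      omega
    · have : (reducedContent (a :: l)).length ≥ 0 := Nat.zero_le _
      omega
end
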